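/- Every copyless CRA over a commutative monoid (D, ⊗) with k registers can be simulated by a (copyful) CRA over (D, ⊗c) with 2^k registers: the new machine keeps one register x_S for each subset S of the original registers, maintaining the invariant that x_S equals the ⊗-sum of the values of the registers in S, and every update of x_S has the form x_{S'} ⊗ c. -/

import Mathlib

/-- A cost register automaton over the additive grammar `G(⊗)` for a commutative
monoid `(D, ⊗)` (written additively): a deterministic finite-state machine with
finitely many write-only registers, where each register is updated at each step to
a `⊗`-sum of registers (with multiplicities) and a constant. -/
structure AddCRA (σ D : Type*) where
  Q : Type*
  finQ : Fintype Q
  q0 : Q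
  X : Type*
  finX : Fintype X
  δ : Q → σ → Q
  /-- `ρ q a x = (coef, c)` means `x := (⊗_y coef y • y) ⊗ c`. -/
  ρ : Q → σ → X → (X → ℕ) × D
  μ : Q → Option ((X → ℕ) × D)

namespace AddCRA

variable {σ D : Type*} [AddCommMonoid D]

/-- Value of an update expression under a register valuation. -/
def evalE (M : AddCRA σ D) (ν : M.X → D) (e : (M.X → ℕ) × D) : D :=
  letI := M.finX
  (∑ x, e.1 x • ν x) + e.2

/-- One step of the machine on input symbol `a`. -/
def step (M : AddCRA σ D) (cfg : M.Q × (M.X → D)) (a : σ) : M.Q × (M.X → D) :=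
  (M.δ cfg.1 a, fun x => M.evalE cfg.2 (M.ρ cfg.1 a x))

/-- The configuration reached on input word `w`, registers initialized to `0`. -/
def run (M : AddCRA σ D) (w : List σ) : M.Q × (M.X → D) :=
  w.foldl M.step (M.q0, fun _ => 0)

/-- The (partial) output of the machine on input word `w`. -/
def output (M : AddCRA σ D) (w : List σ) : Option D :=
  (M.μ (M.run w).1).map (M.evalE (M.run w).2)

/-- A CRA is copyless if in each transition every register appears at most once
across all right-hand sides of register updates, and at most once in each output
expression. -/
def Copyless (M : AddCRA σ D) : Prop :=
  (∀ q a (x : M.X), (letI := M.finX; ∑ y, (M.ρ q a y).1 x) ≤ 1) ∧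
  (∀ q e, M.μ q = some e → ∀ x, e.1 x ≤ 1)

end AddCRA

/-- A cost register automaton (CRA) over the increment grammar `G(⊗c)`:
a deterministic finite-state machine with finitely many write-only registers;
at each step every register is updated either to `y ⊗ c` (a register combined
with a constant) or to a constant `c`.  The output at a state, when defined, is
such an expression over the final register values. -/
structure IncCRA (σ D : Type*) where
  Q : Type*
  finQ : Fintype Q
  q0 : Q
  X : Type*
  finX : Fintype X
  δ : Q → σ → Q
  /-- `ρ q a x = .inl (y, c)` means `x := y ⊗ c`; `ρ q a x = .inr c` means `x := c`. -/
  ρ : Q → σ → X → (X × D) ⊕ D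
  μ : Q → Option ((X × D) ⊕ D)

namespace IncCRA

variable {σ D : Type*}

/-- Value of an update expression under a register valuation, for the
interpretation `op` of `⊗`. -/
def evalE (M : IncCRA σ D) (op : D → D → D) (ν : M.X → D) : (M.X × D) ⊕ D → D
  | .inl (y, c) => op (ν y) c
  | .inr c => c

/-- One step of the machine on input symbol `a`. -/
def step (M : IncCRA σ D) (op : D → D → D) (cfg : M.Q × (M.X → D)) (a : σ) :
    M.Q × (M.X → D) :=
  (M.δ cfg.1 a, fun x => M.evalE op cfg.2 (M.ρ cfg.1 a x))

/-- The configuration reached on input word `w`, starting with all registers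
holding the initial value `init`. -/
def run (M : IncCRA σ D) (op : D → D → D) (init : D) (w : List σ) : M.Q × (M.X → D) :=
  w.foldl (M.step op) (M.q0, fun _ => init)

/-- The (partial) output of the machine on input word `w`. -/
def output (M : IncCRA σ D) (op : D → D → D) (init : D) (w : List σ) : Option D :=
  (M.μ (M.run op init w).1).map (M.evalE op (M.run op init w).2)

end IncCRA


section ConvAux
universe uQ uX
variable {σ D : Type*} [AddCommMonoid D]

/-- A copy of the state space of `M` living in an arbitrary universe. -/
def AddCRA.convQ (M : AddCRA σ D) : Type uQ :=
  ULift (Fin (letI := M.finQ; Fintype.card M.Q))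

/-- A register space with one register per subset of `M.X`, in an arbitrary universe. -/
def AddCRA.convX (M : AddCRA σ D) : Type uX :=
  ULift (Fin (letI := M.finX; Fintype.card (Finset M.X)))

noncomputable def AddCRA.eQ (M : AddCRA σ D) : M.convQ ≃ M.Q :=
  letI := M.finQ
  Equiv.ulift.trans (Fintype.equivFin M.Q).symm

noncomputable def AddCRA.eX (M : AddCRA σ D) : M.convX ≃ Finset M.X :=
  letI := M.finX
  Equiv.ulift.trans (Fintype.equivFin (Finset M.X)).symm

/-- The simulating increment CRA: one register per subset of `M.X`. -/
noncomputable def AddCRA.conv (M : AddCRA σ D) : IncCRA σ D where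
  Q := M.convQ
  finQ := letI := M.finQ; Fintype.ofEquiv _ M.eQ.symm
  q0 := M.eQ.symm M.q0
  X := M.convX
  finX := letI := M.finX; Fintype.ofEquiv _ M.eX.symm
  δ := fun q a => M.eQ.symm (M.δ (M.eQ q) a)
  ρ := fun q a S =>
    letI := M.finX
    .inl (M.eX.symm
            (Finset.univ.filter (fun y => ∑ x ∈ M.eX S, (M.ρ (M.eQ q) a x).1 y ≠ 0)),
          ∑ x ∈ M.eX S, (M.ρ (M.eQ q) a x).2)
  μ := fun q => (M.μ (M.eQ q)).map (fun e =>
    letI := M.finX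
    .inl (M.eX.symm (Finset.univ.filter (fun y => e.1 y ≠ 0)), e.2))

lemma AddCRA.sum_smul_of_le_one (M : AddCRA σ D) (ν : M.X → D) (t : M.X → ℕ)
    (ht : ∀ y, t y ≤ 1) :
    (letI := M.finX; ∑ y, t y • ν y)
      = (letI := M.finX; ∑ y ∈ Finset.univ.filter (fun y => t y ≠ 0), ν y) := by
  letI := M.finX
  calc (∑ y, t y • ν y) = ∑ y, if t y ≠ 0 then ν y else 0 := by
        refine Finset.sum_congr rfl fun y _ => ?_
        rcases Nat.le_one_iff_eq_zero_or_eq_one.mp (ht y) with h | h <;> simp [h]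
    _ = ∑ y ∈ Finset.univ.filter (fun y => t y ≠ 0), ν y := by
        rw [Finset.sum_filter]

/-- Step preserves the subset-sum invariant. -/
lemma AddCRA.conv_step (M : AddCRA σ D) (hM : M.Copyless)
    (cfg : M.Q × (M.X → D)) (cfg' : M.conv.Q × (M.conv.X → D))
    (h1 : M.eQ cfg'.1 = cfg.1)
    (h2 : ∀ S : Finset M.X, cfg'.2 (M.eX.symm S) = ∑ x ∈ S, cfg.2 x) (a : σ) :
    M.eQ (M.conv.step (· + ·) cfg' a).1 = (M.step cfg a).1 ∧
      ∀ S : Finset M.X,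
        (M.conv.step (· + ·) cfg' a).2 (M.eX.symm S) = ∑ x ∈ S, (M.step cfg a).2 x := by
  letI := M.finX
  obtain ⟨q', ν'⟩ := cfg'
  obtain ⟨q, ν⟩ := cfg
  simp only at h1
  constructor
  · show M.eQ (M.eQ.symm _) = _
    rw [Equiv.apply_symm_apply, h1]
    rfl
  intro S
  have hb : ∀ y, (∑ x ∈ S, (M.ρ q a x).1 y) ≤ 1 := fun y =>
    le_trans (Finset.sum_le_sum_of_subset (Finset.subset_univ S)) (hM.1 q a y)
  have h2' : ∀ S : Finset M.X, ν' (M.eX.symm S) = ∑ x ∈ S, ν x := h2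
  show (ν' _) + _ = _
  rw [show M.eX (M.eX.symm S) = S from Equiv.apply_symm_apply _ _, h1, h2']
  simp only [AddCRA.step, AddCRA.evalE, Finset.sum_add_distrib]
  congr 1
  rw [Finset.sum_comm]
  have := M.sum_smul_of_le_one ν (fun y => ∑ x ∈ S, (M.ρ q a x).1 y) hb
  try simp only at this
  rw [← this]
  refine Finset.sum_congr rfl fun y _ => ?_
  rw [Finset.sum_smul]

lemma AddCRA.conv_run (M : AddCRA σ D) (hM : M.Copyless) (w : List σ) :
    ∀ p, p = M.conv.run (· + ·) 0 w →
      M.eQ p.1 = (M.run w).1 ∧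
        ∀ S : Finset M.X, p.2 (M.eX.symm S) = ∑ x ∈ S, (M.run w).2 x := by
  letI := M.finX
  rintro p rfl
  unfold AddCRA.run IncCRA.run
  suffices h : ∀ (cfg : M.Q × (M.X → D)) (cfg' : M.conv.Q × (M.conv.X → D)),
      M.eQ cfg'.1 = cfg.1 → (∀ S : Finset M.X, cfg'.2 (M.eX.symm S) = ∑ x ∈ S, cfg.2 x) →
      M.eQ (w.foldl (M.conv.step (· + ·)) cfg').1 = (w.foldl M.step cfg).1 ∧
        ∀ S : Finset M.X,
          (w.foldl (M.conv.step (· + ·)) cfg').2 (M.eX.symm S)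
            = ∑ x ∈ S, (w.foldl M.step cfg).2 x by
    refine h _ _ ?_ (by simp)
    exact Equiv.apply_symm_apply _ _
  induction w with
  | nil => exact fun cfg cfg' h1 h2 => ⟨h1, h2⟩
  | cons a w ih =>
    intro cfg cfg' h1 h2
    obtain ⟨g1, g2⟩ := M.conv_step hM cfg cfg' h1 h2 a
    exact ih _ _ g1 g2

lemma AddCRA.conv_output (M : AddCRA σ D) (hM : M.Copyless) (w : List σ) :
    M.conv.output (· + ·) 0 w = M.output w := by
  letI := M.finX
  unfold AddCRA.output IncCRA.output
  have hμ : ∀ q, M.conv.μ q = (M.μ (M.eQ q)).map (fun e =>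
      Sum.inl (M.eX.symm (Finset.univ.filter (fun y => e.1 y ≠ 0)), e.2)) := fun _ => rfl
  rw [hμ]
  obtain ⟨h1, h2⟩ := M.conv_run hM w _ rfl
  rw [h1]; erw [Option.map_map]
  cases hout : M.μ (M.run w).1 with
  | none => rfl
  | some e =>
    simp only [Option.map_some, Function.comp]
    congr 1
    show (M.conv.run (· + ·) 0 w).2 (M.eX.symm _) + e.2 = _
    rw [h2]
    unfold AddCRA.evalE
    congr 1
    have := M.sum_smul_of_le_one (M.run w).2 e.1 (hM.2 _ e hout)
    try simp only at this
    rw [this]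

end ConvAux

/-- Every copyless CRA over a commutative monoid `(D, ⊗)` with `k` registers can be
simulated by a (copyful) CRA over `(D, ⊗c)` with `2^k` registers: the new machine
has one register `x_S` for each subset `S` of the original registers (so every
update has the form `x_{S'} ⊗ c`), maintaining the invariant that `x_S` equals the
`⊗`-sum of the values of the registers in `S`; in particular it computes the same
function. -/
theorem copylessAdd_to_IncCRA {σ D : Type*} [AddCommMonoid D]
    (M : AddCRA σ D) (hM : M.Copyless) :
    ∃ (M' : IncCRA σ D) (e : M'.X ≃ Finset M.X),
      (∀ w : List σ, M'.output (· + ·) 0 w = M.output w) ∧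
      (∀ (w : List σ) (S : Finset M.X),
        (M'.run (· + ·) 0 w).2 (e.symm S) = ∑ x ∈ S, (M.run w).2 x) := by
  exact ⟨M.conv, M.eX, fun w => M.conv_output hM w, fun w S => (M.conv_run hM w _ rfl).2 S⟩
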